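/- Let Y1,…,Yd have joint law dμ•(𝐫) = H dμ⊗(𝐫) where μ⊗(𝐫) is the product of Meixner laws μ(𝐫1),…,μ(𝐫d) and H has mean square expansion H(x) = Σ_n H_n ∏_i P_{n_i}(x_i;𝐫_i) with Σ_n H_n² ∏_i 𝔥_{n_i}(𝐫_i) < ∞. Then for each j, Y_j has law μ(𝐫_j) if and only if H_{n(j,m)} = 0 for every m ≥ 1, where n(j,m) is the multi-index with m in position j and zeros elsewhere. -/

import Mathlib

open MeasureTheory
open scoped ENNReal NNReal

lemma aux_integrable_mul_L2 {α : Type*} [MeasurableSpace α] {μ : Measure α} {f g : α → ℝ}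
    (hf : MemLp f 2 μ) (hg : MemLp g 2 μ) : Integrable (fun x => f x * g x) μ := by
  have h := hg.smul (φ := f) hf (r := 1)
  rw [← memLp_one_iff_integrable]
  exact h

lemma aux_sq_lintegral_le {β : Type*} [MeasurableSpace β] (ν : Measure β) [IsProbabilityMeasure ν]
    {f : β → ℝ≥0∞} (hf : Measurable f) :
    (∫⁻ z, f z ∂ν) ^ 2 ≤ ∫⁻ z, f z ^ 2 ∂ν := by
  have hpq : Real.HolderConjugate 2 2 := Real.HolderConjugate.two_two
  have h := ENNReal.lintegral_mul_le_Lp_mul_Lq ν hpq hf.aemeasurable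
      (g := fun _ => (1 : ℝ≥0∞)) aemeasurable_const
  simp only [Pi.mul_apply, mul_one, ENNReal.one_rpow, lintegral_one, measure_univ,
    ENNReal.one_rpow, one_mul] at h
  have h2 := ENNReal.rpow_le_rpow h (by norm_num : (0:ℝ) ≤ 2)
  rw [← ENNReal.rpow_natCast ((∫⁻ z, f z ∂ν)) 2]
  push_cast
  refine h2.trans_eq ?_
  rw [← ENNReal.rpow_mul]
  norm_num


lemma aux_map_equiv_withDensity {α β : Type*} [MeasurableSpace α] [MeasurableSpace β]
    (e : α ≃ᵐ β) (μ : Measure α) {f : α → ℝ≥0∞} (hf : Measurable f) :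
    Measure.map e (μ.withDensity f) = (Measure.map e μ).withDensity (f ∘ e.symm) := by
  ext s hs
  rw [Measure.map_apply e.measurable hs, withDensity_apply _ (e.measurable hs),
    withDensity_apply _ hs,
    setLIntegral_map hs (hf.comp e.symm.measurable) e.measurable]
  refine setLIntegral_congr_fun (e.measurable hs) (fun x _ => ?_)
  simp

lemma aux_map_fst_prod_withDensity {α β : Type*} [MeasurableSpace α] [MeasurableSpace β]
    (μ : Measure α) (ν : Measure β) [SFinite μ] [SFinite ν]
    {g : α × β → ℝ≥0∞} (hg : Measurable g) :
    Measure.map Prod.fst ((μ.prod ν).withDensity g)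
      = μ.withDensity fun y => ∫⁻ z, g (y, z) ∂ν := by
  ext s hs
  rw [Measure.map_apply measurable_fst hs, withDensity_apply _ (measurable_fst hs),
    withDensity_apply _ hs]
  have hpre : Prod.fst ⁻¹' s = s ×ˢ (Set.univ : Set β) := by
    ext p; simp
  rw [hpre, ← Measure.restrict_prod_eq_prod_univ, lintegral_prod _ hg.aemeasurable]
/-- A Meixner class of probability laws `μ(𝐫)` on `ℝ`, indexed by the mean–variance
parameter `𝐫`, with orthogonal polynomials `P_n(·;𝐫)`, squared norms `𝔥_n(𝐫)`, and
generating function `e^{x·u(z)}/M(u(z);𝐫) = Σ_n P_n(x;𝐫) zⁿ/n!`. -/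
structure MeixnerFamily where
  μ : ℝ × ℝ → Measure ℝ
  P : ℕ → ℝ → ℝ × ℝ → ℝ
  𝔥 : ℕ → ℝ × ℝ → ℝ
  u : ℝ → ℝ
  M : ℝ → ℝ × ℝ → ℝ
  S : Set ℝ
  prob : ∀ r, IsProbabilityMeasure (μ r)
  S_nhds : S ∈ nhds (0 : ℝ)
  P_meas : ∀ n r, Measurable fun x => P n x r
  P_memL2 : ∀ n r, MemLp (fun x => P n x r) 2 (μ r)
  P_zero : ∀ x r, P 0 x r = 1
  orth : ∀ r m n, ∫ x, P m x r * P n x r ∂(μ r) = if m = n then 𝔥 n r else 0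
  𝔥_pos : ∀ n r, 0 < 𝔥 n r
  M_pos : ∀ r, ∀ z ∈ S, 0 < M (u z) r
  M_eq : ∀ r, ∀ z ∈ S, M (u z) r = ∫ x, Real.exp (u z * x) ∂(μ r)
  gen : ∀ r, ∀ z ∈ S, ∀ x : ℝ,
    HasSum (fun n => P n x r * z ^ n / (n.factorial : ℝ))
      (Real.exp (x * u z) / M (u z) r)
  complete : ∀ r, ∀ g : ℝ → ℝ, Measurable g → MemLp g 2 (μ r) →
    (∀ n, ∫ x, g x * P n x r ∂(μ r) = 0) → g =ᵐ[μ r] 0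

/-- Matching-marginals criterion (Theorem 2(1)): with joint law `dμ• = H dμ⊗` and
mean-square expansion coefficients `H_n`, the `j`-th marginal of `μ•` equals `μ(𝐫_j)`
iff `H_{n(j,m)} = 0` for all `m ≥ 1`. -/
theorem meixner_matching_marginals
    (MF : MeixnerFamily) (d : ℕ) (r : Fin d → ℝ × ℝ)
    (H : (Fin d → ℝ) → ℝ) (hHmeas : Measurable H) (hHnn : ∀ x, 0 ≤ H x)
    (hHL2 : MemLp H 2 (Measure.pi fun i => MF.μ (r i)))
    (Hc : (Fin d → ℕ) → ℝ)
    (hcoef : ∀ n : Fin d → ℕ,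
      ∫ x, H x * ∏ i, MF.P (n i) (x i) (r i) ∂(Measure.pi fun i => MF.μ (r i))
        = Hc n * ∏ i, MF.𝔥 (n i) (r i))
    (hone : Hc (fun _ => 0) = 1) :
    ∀ j : Fin d,
      (Measure.map (fun x : Fin d → ℝ => x j)
          ((Measure.pi fun i => MF.μ (r i)).withDensity fun x => ENNReal.ofReal (H x))
        = MF.μ (r j))
      ↔ (∀ m : ℕ, 1 ≤ m → Hc (Pi.single j m) = 0) := by
  haveI hprob : ∀ i, IsProbabilityMeasure (MF.μ (r i)) := fun i => MF.prob _
  intro j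
  obtain ⟨d', rfl⟩ : ∃ d', d = d' + 1 := ⟨d - 1, by have := j.pos; omega⟩
  set π : Measure (Fin (d' + 1) → ℝ) := Measure.pi fun i => MF.μ (r i) with hπ
  haveI : IsProbabilityMeasure π := by rw [hπ]; infer_instance
  have h𝔥0 : ∀ p, MF.𝔥 0 p = 1 := by
    intro p
    haveI := MF.prob p
    have h := (MF.orth p 0 0).symm
    simpa [MF.P_zero] using h
  have hprodP : ∀ (n : ℕ) (x : Fin (d' + 1) → ℝ),
      (∏ i, MF.P ((Pi.single j n : Fin (d'+1) → ℕ) i) (x i) (r i)) = MF.P n (x j) (r j) := by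
    intro n x
    rw [Finset.prod_eq_single j (fun i _ hij => by rw [Pi.single_eq_of_ne hij, MF.P_zero])
      (fun hj => absurd (Finset.mem_univ j) hj), Pi.single_eq_same]
  have hprod𝔥 : ∀ n : ℕ, (∏ i, MF.𝔥 ((Pi.single j n : Fin (d'+1) → ℕ) i) (r i)) = MF.𝔥 n (r j) := by
    intro n
    rw [Finset.prod_eq_single j (fun i _ hij => by rw [Pi.single_eq_of_ne hij, h𝔥0])
      (fun hj => absurd (Finset.mem_univ j) hj), Pi.single_eq_same]
  set f : (Fin (d' + 1) → ℝ) → ℝ≥0∞ := fun x => ENNReal.ofReal (H x) with hfdef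
  have hfm : Measurable f := hHmeas.ennreal_ofReal
  have key : ∀ n : ℕ,
      ∫ y, MF.P n y (r j)
          ∂(Measure.map (fun x : Fin (d' + 1) → ℝ => x j) (π.withDensity f))
        = Hc ((Pi.single j n : Fin (d'+1) → ℕ)) * MF.𝔥 n (r j) := by
    intro n
    rw [integral_map (measurable_pi_apply j).aemeasurable
      (MF.P_meas n (r j)).aestronglyMeasurable]
    have hco : π.withDensity f = π.withDensity fun x => ((H x).toNNReal : ℝ≥0∞) := rfl
    rw [hco, integral_withDensity_eq_integral_smul hHmeas.real_toNNReal]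
    have hfun : (fun x : Fin (d' + 1) → ℝ => (H x).toNNReal • MF.P n (x j) (r j))
        = fun x => H x * ∏ i, MF.P ((Pi.single j n : Fin (d'+1) → ℕ) i) (x i) (r i) := by
      funext x
      rw [hprodP n x, NNReal.smul_def, Real.coe_toNNReal _ (hHnn x), smul_eq_mul]
    rw [hfun, hcoef (Pi.single j n), hprod𝔥 n]
  have intP : ∀ n, ∫ y, MF.P n y (r j) ∂(MF.μ (r j))
      = if 0 = n then MF.𝔥 n (r j) else 0 := by
    intro n
    have h := MF.orth (r j) 0 n
    simpa [MF.P_zero] using h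
  constructor
  · intro heq m hm
    have hk := key m
    rw [heq, intP m, if_neg (by omega)] at hk
    exact ((mul_eq_zero.mp hk.symm).resolve_right (MF.𝔥_pos m (r j)).ne')
  · intro hz
    set e := MeasurableEquiv.piFinSuccAbove (fun _ : Fin (d' + 1) => ℝ) j with he
    set πc : Measure (Fin d' → ℝ) := Measure.pi fun i => MF.μ (r (j.succAbove i)) with hπc
    set μj := MF.μ (r j) with hμj
    haveI : IsProbabilityMeasure πc := by rw [hπc]; infer_instance
    haveI : IsProbabilityMeasure μj := MF.prob _
    have mp : MeasurePreserving e π (μj.prod πc) :=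
      measurePreserving_piFinSuccAbove (fun i => MF.μ (r i)) j
    set g : ℝ × (Fin d' → ℝ) → ℝ≥0∞ := f ∘ e.symm with hgdef
    have hgm : Measurable g := hfm.comp e.symm.measurable
    set h : ℝ → ℝ≥0∞ := fun y => ∫⁻ z, g (y, z) ∂πc with hhdef
    have hhm : Measurable h := hgm.lintegral_prod_right'
    have hν : Measure.map (fun x : Fin (d' + 1) → ℝ => x j) (π.withDensity f)
        = μj.withDensity h := by
      have hcomp : (fun x : Fin (d' + 1) → ℝ => x j) = Prod.fst ∘ e := by
        funext x; rfl
      rw [hcomp, ← Measure.map_map measurable_fst e.measurable,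
        aux_map_equiv_withDensity e π hfm]
      rw [mp.map_eq, aux_map_fst_prod_withDensity μj πc hgm]
    have hHint : Integrable H π := hHL2.integrable (by norm_num)
    have hfint : ∫⁻ x, f x ∂π < ∞ := hHint.lintegral_lt_top
    have hint_h : ∫⁻ y, h y ∂μj = ∫⁻ x, f x ∂π := by
      rw [← lintegral_prod _ hgm.aemeasurable, ← mp.lintegral_comp hgm]
      refine lintegral_congr fun x => ?_
      simp [hgdef]
    have hhfin : ∀ᵐ y ∂μj, h y < ∞ := ae_lt_top hhm (by rw [hint_h]; exact hfint.ne)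
    have hH2 : ∫⁻ x, f x ^ 2 ∂π < ∞ := by
      have h2 := hHL2.2
      rw [eLpNorm_lt_top_iff_lintegral_rpow_enorm_lt_top two_ne_zero ENNReal.ofNat_ne_top] at h2
      refine lt_of_eq_of_lt (lintegral_congr fun x => ?_) h2
      rw [Real.enorm_eq_ofReal (hHnn x)]
      rw [← ENNReal.rpow_natCast (ENNReal.ofReal (H x)) 2]
      norm_num
    have hh2 : ∫⁻ y, h y ^ 2 ∂μj < ∞ := by
      have step1 : ∫⁻ y, h y ^ 2 ∂μj ≤ ∫⁻ y, ∫⁻ z, g (y, z) ^ 2 ∂πc ∂μj :=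
        lintegral_mono fun y =>
          aux_sq_lintegral_le πc (hgm.comp measurable_prodMk_left)
      refine lt_of_le_of_lt step1 ?_
      rw [← lintegral_prod _ (hgm.pow_const 2).aemeasurable,
        ← mp.lintegral_comp (hgm.pow_const 2)]
      refine lt_of_eq_of_lt (lintegral_congr fun x => ?_) hH2
      simp [hgdef]
    set G : ℝ → ℝ := fun y => (h y).toReal with hGdef
    have hGm : Measurable G := hhm.ennreal_toReal
    have hGL2 : MemLp G 2 μj := by
      rw [memLp_two_iff_integrable_sq hGm.aestronglyMeasurable]
      refine ⟨(hGm.pow_const 2).aestronglyMeasurable, ?_⟩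
      rw [hasFiniteIntegral_iff_ofReal (Filter.Eventually.of_forall fun y => sq_nonneg _)]
      refine lt_of_le_of_lt (lintegral_mono fun y => ?_) hh2
      have hGy : ENNReal.ofReal (G y ^ 2) = ENNReal.ofReal ((h y ^ 2).toReal) := by
        rw [ENNReal.toReal_pow]
      rw [hGy]
      exact ENNReal.ofReal_toReal_le
    have hwd : μj.withDensity h = μj.withDensity fun y => ENNReal.ofReal (G y) := by
      refine withDensity_congr_ae ?_
      filter_upwards [hhfin] with y hy
      exact (ENNReal.ofReal_toReal hy.ne).symm
    have intG : ∀ n, ∫ y, G y * MF.P n y (r j) ∂μj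
        = Hc (Pi.single j n) * MF.𝔥 n (r j) := by
      intro n
      have hk := key n
      rw [hν, hwd] at hk
      have hco : (μj.withDensity fun y => ENNReal.ofReal (G y))
          = μj.withDensity fun y => ((G y).toNNReal : ℝ≥0∞) := rfl
      rw [hco, integral_withDensity_eq_integral_smul hGm.real_toNNReal] at hk
      rw [← hk]
      have hGnn : ∀ y, 0 ≤ G y := fun y => ENNReal.toReal_nonneg
      refine integral_congr_ae (Filter.Eventually.of_forall fun y => ?_)
      show G y * MF.P n y (r j) = (G y).toNNReal • MF.P n y (r j)
      rw [NNReal.smul_def, Real.coe_toNNReal _ (hGnn y), smul_eq_mul]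
    have hPint : ∀ n, Integrable (fun y => MF.P n y (r j)) μj :=
      fun n => (MF.P_memL2 n (r j)).integrable (by norm_num)
    have hGP : ∀ n, Integrable (fun y => G y * MF.P n y (r j)) μj :=
      fun n => aux_integrable_mul_L2 hGL2 (MF.P_memL2 n (r j))
    have hzero : (fun y => G y - 1) =ᵐ[μj] 0 := by
      refine MF.complete (r j) _ (hGm.sub measurable_const)
        (hGL2.sub (memLp_const 1)) fun n => ?_
      have hfun : (fun y => (G y - 1) * MF.P n y (r j))
          = fun y => G y * MF.P n y (r j) - MF.P n y (r j) := by
        funext y; ring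
      rw [hfun, integral_sub (hGP n) (hPint n), intG n, intP n]
      rcases Nat.eq_zero_or_pos n with hn0 | hn1
      · subst hn0
        rw [if_pos rfl, Pi.single_zero]
        have h1 : Hc 0 = 1 := hone
        rw [h1, one_mul, sub_self]
      · rw [hz n hn1, if_neg (by omega), zero_mul, sub_zero]
    rw [hν, hwd]
    have hone' : (fun y => ENNReal.ofReal (G y)) =ᵐ[μj] fun _ => (1 : ℝ≥0∞) := by
      filter_upwards [hzero] with y hy
      have : G y = 1 := by
        have := hy
        simpa [sub_eq_zero] using this
      simp [this]
    rw [withDensity_congr_ae hone',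
      show (fun _ : ℝ => (1 : ℝ≥0∞)) = (1 : ℝ → ℝ≥0∞) from rfl, withDensity_one]
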